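/- Suppose α = 0, q > 0, and 0 ≤ M ≤ N. Then an admissible u is a global minimizer of ∫_Ω H_TF if and only if u₋₁(x) = 0 and u₁(x)² + u₀(x)² = n for almost every x ∈ Ω. -/

import Mathlib

open MeasureTheory
open scoped ENNReal

noncomputable section

abbrev E3 := EuclideanSpace ℝ (Fin 3)

/-- The sign `s`: `1` if `α ≥ 0`, `-1` otherwise. -/
def sgn' (α : ℝ) : ℝ := if 0 ≤ α then 1 else -1

/-- Thomas–Fermi energy density; coordinates: `v 0 = u₁`, `v 1 = u₀`, `v 2 = u₋₁`. -/
def HTF (α q : ℝ) (v : Fin 3 → ℝ) : ℝ :=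
  (1/2) * (v 0 ^ 2 + v 1 ^ 2 + v 2 ^ 2) ^ 2
    + (α/2) * (2 * v 1 ^ 2 * (v 0 - sgn' α * v 2) ^ 2 + (v 0 ^ 2 - v 2 ^ 2) ^ 2)
    + q * (v 0 ^ 2 + v 2 ^ 2)

/-- Admissibility: `u ∈ L⁴(Ω; ℝ³)`, nonnegative components a.e. on `Ω`,
with prescribed total mass `N` and total magnetization `M`. -/
structure Admissible (Ω : Set E3) (N M : ℝ) (u : E3 → Fin 3 → ℝ) : Prop where
  memL4 : MemLp u 4 (volume.restrict Ω)
  nonneg : ∀ᵐ x ∂(volume.restrict Ω), ∀ i, 0 ≤ u x i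
  mass : ∫ x in Ω, (u x 0 ^ 2 + u x 1 ^ 2 + u x 2 ^ 2) = N
  mag : ∫ x in Ω, (u x 0 ^ 2 - u x 2 ^ 2) = M

/-- `u` is a global minimizer of `∫_Ω H_TF` among admissible functions. -/
def IsMinimizer (Ω : Set E3) (α q N M : ℝ) (u : E3 → Fin 3 → ℝ) : Prop :=
  Admissible Ω N M u ∧
    ∀ v : E3 → Fin 3 → ℝ, Admissible Ω N M v →
      ∫ x in Ω, HTF α q (u x) ≤ ∫ x in Ω, HTF α q (v x)

lemma half_eq_quarter_add : (1:ℝ≥0∞)/2 = 1/4 + 1/4 := by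
  simp only [one_div]
  have h4 : ((4:ℝ≥0∞)) = 2 * 2 := by norm_num
  rw [h4, ← two_mul, ENNReal.mul_inv (by norm_num) (by norm_num), ← mul_assoc,
    ENNReal.mul_inv_cancel (by norm_num) (by norm_num), one_mul]

/-- `α = 0`, `q > 0`: minimizers are exactly the functions with `u₋₁ = 0` and `u₁² + u₀² = n` a.e. -/
theorem alpha0_qpos
    (Ω : Set E3) (hΩm : MeasurableSet Ω) (hΩb : Bornology.IsBounded Ω)
    (hΩpos : 0 < volume Ω)
    (α q N M n m : ℝ)
    (hN : 0 < N)
    (hn : n = N / (volume Ω).toReal) (hm : m = M / (volume Ω).toReal)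
    (hα : α = 0) (hq : 0 < q) (hM0 : 0 ≤ M) (hMN : M ≤ N)
    (u : E3 → Fin 3 → ℝ) (hu : Admissible Ω N M u) :
    IsMinimizer Ω α q N M u ↔
      ∀ᵐ x ∂(volume.restrict Ω), u x 2 = 0 ∧ u x 0 ^ 2 + u x 1 ^ 2 = n := by
  subst hα
  have hfin : volume Ω < ⊤ := hΩb.measure_lt_top
  haveI hFM : IsFiniteMeasure (volume.restrict Ω) :=
    ⟨by rw [Measure.restrict_apply_univ]; exact hfin⟩
  set I := (volume Ω).toReal with hIdef
  have hI : 0 < I := ENNReal.toReal_pos hΩpos.ne' hfin.ne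
  have hnI : n * I = N := by rw [hn, div_mul_cancel₀ _ hI.ne']
  have hmI : m * I = M := by rw [hm, div_mul_cancel₀ _ hI.ne']
  have hm0 : 0 ≤ m := by rw [hm]; positivity
  have hmn : m ≤ n := by
    rw [hm, hn]; gcongr
  -- integrability machinery
  have comp4 : ∀ (w : E3 → Fin 3 → ℝ), MemLp w 4 (volume.restrict Ω) →
      ∀ i : Fin 3, MemLp (fun x => w x i) 4 (volume.restrict Ω) := fun w hw i =>
    hw.of_le ((continuous_apply i).comp_aestronglyMeasurable hw.1)
      (Filter.Eventually.of_forall fun x => norm_le_pi_norm (w x) i)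
  have sq2 : ∀ f : E3 → ℝ, MemLp f 4 (volume.restrict Ω) →
      MemLp (fun x => f x ^ 2) 2 (volume.restrict Ω) := by
    intro f hf
    have h2 : (fun x => f x ^ 2) = (f • f) := by funext x; simp [pow_two]
    rw [h2]; exact hf.smul hf (hpqr := ⟨by simpa only [one_div] using half_eq_quarter_add.symm⟩)
  have memρ : ∀ w : E3 → Fin 3 → ℝ, MemLp w 4 (volume.restrict Ω) →
      MemLp (fun x => w x 0 ^ 2 + w x 1 ^ 2 + w x 2 ^ 2) 2 (volume.restrict Ω) := by
    intro w hw
    exact ((sq2 _ (comp4 w hw 0)).add (sq2 _ (comp4 w hw 1))).add (sq2 _ (comp4 w hw 2))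
  have intA : ∀ w : E3 → Fin 3 → ℝ, MemLp w 4 (volume.restrict Ω) →
      Integrable (fun x => (w x 0 ^ 2 + w x 1 ^ 2 + w x 2 ^ 2 - n) ^ 2)
        (volume.restrict Ω) := by
    intro w hw
    exact ((memρ w hw).sub (memLp_const n)).integrable_sq
  have intB : ∀ w : E3 → Fin 3 → ℝ, MemLp w 4 (volume.restrict Ω) →
      Integrable (fun x => w x 2 ^ 2) (volume.restrict Ω) := fun w hw =>
    (sq2 _ (comp4 w hw 2)).integrable (by norm_num)
  have intρ : ∀ w : E3 → Fin 3 → ℝ, MemLp w 4 (volume.restrict Ω) →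
      Integrable (fun x => w x 0 ^ 2 + w x 1 ^ 2 + w x 2 ^ 2) (volume.restrict Ω) :=
    fun w hw => (memρ w hw).integrable (by norm_num)
  have intD : ∀ w : E3 → Fin 3 → ℝ, MemLp w 4 (volume.restrict Ω) →
      Integrable (fun x => w x 0 ^ 2 - w x 2 ^ 2) (volume.restrict Ω) := fun w hw =>
    ((sq2 _ (comp4 w hw 0)).integrable (by norm_num)).sub (intB w hw)
  -- the key energy identity
  have key : ∀ w : E3 → Fin 3 → ℝ, Admissible Ω N M w →
      ∫ x in Ω, HTF 0 q (w x)
        = (1/2) * (∫ x in Ω, (w x 0 ^ 2 + w x 1 ^ 2 + w x 2 ^ 2 - n) ^ 2)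
          + 2 * q * (∫ x in Ω, w x 2 ^ 2) + (n * N / 2 + q * M) := by
    intro w hw
    have hpt : ∀ x : E3, HTF 0 q (w x)
        = (1/2) * (w x 0 ^ 2 + w x 1 ^ 2 + w x 2 ^ 2 - n) ^ 2 + 2 * q * w x 2 ^ 2
          + ((n * (w x 0 ^ 2 + w x 1 ^ 2 + w x 2 ^ 2)
              + q * (w x 0 ^ 2 - w x 2 ^ 2)) - n ^ 2 / 2) := by
      intro x; simp only [HTF]; ring
    have ia1 : Integrable (fun x => n * (w x 0 ^ 2 + w x 1 ^ 2 + w x 2 ^ 2))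
        (volume.restrict Ω) := (intρ w hw.memL4).const_mul n
    have ia2 : Integrable (fun x => q * (w x 0 ^ 2 - w x 2 ^ 2)) (volume.restrict Ω) :=
      (intD w hw.memL4).const_mul q
    have ia12 : Integrable (fun x => n * (w x 0 ^ 2 + w x 1 ^ 2 + w x 2 ^ 2)
        + q * (w x 0 ^ 2 - w x 2 ^ 2)) (volume.restrict Ω) := ia1.add ia2
    have ib1 : Integrable (fun x => (1/2) * (w x 0 ^ 2 + w x 1 ^ 2 + w x 2 ^ 2 - n) ^ 2)
        (volume.restrict Ω) := (intA w hw.memL4).const_mul (1/2)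
    have ib2 : Integrable (fun x => 2 * q * w x 2 ^ 2) (volume.restrict Ω) :=
      (intB w hw.memL4).const_mul (2*q)
    have ib12 : Integrable (fun x => (1/2) * (w x 0 ^ 2 + w x 1 ^ 2 + w x 2 ^ 2 - n) ^ 2
        + 2 * q * w x 2 ^ 2) (volume.restrict Ω) := ib1.add ib2
    have ia123 : Integrable (fun x => (n * (w x 0 ^ 2 + w x 1 ^ 2 + w x 2 ^ 2)
        + q * (w x 0 ^ 2 - w x 2 ^ 2)) - n ^ 2 / 2) (volume.restrict Ω) :=
      ia12.sub (integrable_const _)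
    have e3 : ∫ x in Ω, ((n * (w x 0 ^ 2 + w x 1 ^ 2 + w x 2 ^ 2)
        + q * (w x 0 ^ 2 - w x 2 ^ 2)) - n ^ 2 / 2) = n * N / 2 + q * M := by
      rw [integral_sub ia12 (integrable_const _),
          integral_add ia1 ia2,
          integral_const_mul, integral_const_mul, hw.mass, hw.mag,
          setIntegral_const, smul_eq_mul]
      have hIn : I * (n ^ 2 / 2) = n * N / 2 := by
        rw [show I * (n ^ 2 / 2) = (n * I) * n / 2 by ring, hnI]; ring
      have hIn' : volume.real Ω * (n ^ 2 / 2) = n * N / 2 := hIn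
      linarith
    calc ∫ x in Ω, HTF 0 q (w x)
        = ∫ x in Ω, ((1/2) * (w x 0 ^ 2 + w x 1 ^ 2 + w x 2 ^ 2 - n) ^ 2
            + 2 * q * w x 2 ^ 2
            + ((n * (w x 0 ^ 2 + w x 1 ^ 2 + w x 2 ^ 2)
              + q * (w x 0 ^ 2 - w x 2 ^ 2)) - n ^ 2 / 2)) :=
          integral_congr_ae (Filter.Eventually.of_forall fun x => hpt x)
      _ = (1/2) * (∫ x in Ω, (w x 0 ^ 2 + w x 1 ^ 2 + w x 2 ^ 2 - n) ^ 2)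
          + 2 * q * (∫ x in Ω, w x 2 ^ 2) + (n * N / 2 + q * M) := by
          rw [integral_add ib12 ia123, integral_add ib1 ib2,
            integral_const_mul, integral_const_mul, e3]
  -- lower bound
  have lb : ∀ w : E3 → Fin 3 → ℝ, Admissible Ω N M w →
      n * N / 2 + q * M ≤ ∫ x in Ω, HTF 0 q (w x) := by
    intro w hw
    rw [key w hw]
    have hA : 0 ≤ ∫ x in Ω, (w x 0 ^ 2 + w x 1 ^ 2 + w x 2 ^ 2 - n) ^ 2 :=
      integral_nonneg fun x => sq_nonneg _
    have hB : 0 ≤ ∫ x in Ω, w x 2 ^ 2 := integral_nonneg fun x => sq_nonneg _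
    nlinarith [mul_nonneg hq.le hB]
  -- the candidate minimizer
  have hvAdm : Admissible Ω N M (fun _ => ![Real.sqrt m, Real.sqrt (n - m), 0]) := by
    constructor
    · exact memLp_const _
    · filter_upwards with x i
      fin_cases i
      · exact Real.sqrt_nonneg _
      · exact Real.sqrt_nonneg _
      · exact le_refl 0
    · have e : ∀ x : E3, ((fun (_ : E3) => ![Real.sqrt m, Real.sqrt (n - m), 0]) x 0 ^ 2
          + (fun (_ : E3) => ![Real.sqrt m, Real.sqrt (n - m), 0]) x 1 ^ 2
          + (fun (_ : E3) => ![Real.sqrt m, Real.sqrt (n - m), 0]) x 2 ^ 2) = n := by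
        intro x
        simp only [Matrix.cons_val_zero, Matrix.cons_val_one, Matrix.head_cons,
          Matrix.cons_val_two, Matrix.tail_cons]
        rw [Real.sq_sqrt hm0, Real.sq_sqrt (sub_nonneg.mpr hmn)]
        ring
      rw [integral_congr_ae (Filter.Eventually.of_forall e), setIntegral_const, smul_eq_mul]
      rw [mul_comm]; exact hnI
    · have e : ∀ x : E3, ((fun (_ : E3) => ![Real.sqrt m, Real.sqrt (n - m), 0]) x 0 ^ 2
          - (fun (_ : E3) => ![Real.sqrt m, Real.sqrt (n - m), 0]) x 2 ^ 2) = m := by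
        intro x
        simp only [Matrix.cons_val_zero, Matrix.cons_val_two, Matrix.tail_cons, Matrix.head_cons]
        rw [Real.sq_sqrt hm0]; ring
      rw [integral_congr_ae (Filter.Eventually.of_forall e), setIntegral_const, smul_eq_mul]
      rw [mul_comm]; exact hmI
  have hEv : ∫ x in Ω, HTF 0 q ((fun (_ : E3) => ![Real.sqrt m, Real.sqrt (n - m), 0]) x)
      = n * N / 2 + q * M := by
    rw [key _ hvAdm]
    have hA0 : ∫ x in Ω, ((fun (_ : E3) => ![Real.sqrt m, Real.sqrt (n - m), 0]) x 0 ^ 2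
        + (fun (_ : E3) => ![Real.sqrt m, Real.sqrt (n - m), 0]) x 1 ^ 2
        + (fun (_ : E3) => ![Real.sqrt m, Real.sqrt (n - m), 0]) x 2 ^ 2 - n) ^ 2 = 0 := by
      have e : ∀ x : E3, ((fun (_ : E3) => ![Real.sqrt m, Real.sqrt (n - m), 0]) x 0 ^ 2
          + (fun (_ : E3) => ![Real.sqrt m, Real.sqrt (n - m), 0]) x 1 ^ 2
          + (fun (_ : E3) => ![Real.sqrt m, Real.sqrt (n - m), 0]) x 2 ^ 2 - n) ^ 2 = 0 := by
        intro x
        simp only [Matrix.cons_val_zero, Matrix.cons_val_one, Matrix.head_cons,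
          Matrix.cons_val_two, Matrix.tail_cons]
        rw [Real.sq_sqrt hm0, Real.sq_sqrt (sub_nonneg.mpr hmn)]
        ring
      rw [integral_congr_ae (Filter.Eventually.of_forall e)]
      simp
    have hB0 : ∫ x in Ω, (fun (_ : E3) => ![Real.sqrt m, Real.sqrt (n - m), 0]) x 2 ^ 2 = 0 := by
      have e : ∀ x : E3, (fun (_ : E3) => ![Real.sqrt m, Real.sqrt (n - m), 0]) x 2 ^ 2 = 0 := by
        intro x
        simp [Matrix.cons_val_two, Matrix.tail_cons, Matrix.head_cons]
      rw [integral_congr_ae (Filter.Eventually.of_forall e)]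
      simp
    rw [hA0, hB0]; ring
  constructor
  · -- minimizer → a.e. conditions
    intro hmin
    have hle := hmin.2 _ hvAdm
    rw [hEv, key u hu] at hle
    have hA : 0 ≤ ∫ x in Ω, (u x 0 ^ 2 + u x 1 ^ 2 + u x 2 ^ 2 - n) ^ 2 :=
      integral_nonneg fun x => sq_nonneg _
    have hB : 0 ≤ ∫ x in Ω, u x 2 ^ 2 := integral_nonneg fun x => sq_nonneg _
    have hA0 : ∫ x in Ω, (u x 0 ^ 2 + u x 1 ^ 2 + u x 2 ^ 2 - n) ^ 2 = 0 := by
      nlinarith [mul_nonneg hq.le hB]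
    have hB0 : ∫ x in Ω, u x 2 ^ 2 = 0 := by
      nlinarith [mul_nonneg hq.le hB]
    have hAe := (integral_eq_zero_iff_of_nonneg (fun x => sq_nonneg _) (intA u hu.memL4)).mp hA0
    have hBe := (integral_eq_zero_iff_of_nonneg (fun x => sq_nonneg _) (intB u hu.memL4)).mp hB0
    filter_upwards [hAe, hBe] with x hx1 hx2
    have h2 : u x 2 = 0 := by
      have hz : u x 2 ^ 2 = 0 := hx2
      exact pow_eq_zero_iff two_ne_zero |>.mp hz
    refine ⟨h2, ?_⟩
    have hz1 : (u x 0 ^ 2 + u x 1 ^ 2 + u x 2 ^ 2 - n) ^ 2 = 0 := hx1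
    have hz2 := pow_eq_zero_iff two_ne_zero |>.mp hz1
    have hz3 : u x 2 ^ 2 = 0 := by rw [h2]; ring
    linarith
  · -- a.e. conditions → minimizer
    intro hae
    have hA0 : ∫ x in Ω, (u x 0 ^ 2 + u x 1 ^ 2 + u x 2 ^ 2 - n) ^ 2 = 0 := by
      have e : (fun x => (u x 0 ^ 2 + u x 1 ^ 2 + u x 2 ^ 2 - n) ^ 2)
          =ᵐ[volume.restrict Ω] (fun _ => (0:ℝ)) := by
        filter_upwards [hae] with x hx
        obtain ⟨h2, h1⟩ := hx
        have hz3 : u x 2 ^ 2 = 0 := by rw [h2]; ring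
        have : u x 0 ^ 2 + u x 1 ^ 2 + u x 2 ^ 2 - n = 0 := by rw [hz3]; linarith
        rw [this]; ring
      rw [integral_congr_ae e]; simp
    have hB0 : ∫ x in Ω, u x 2 ^ 2 = 0 := by
      have e : (fun x => u x 2 ^ 2) =ᵐ[volume.restrict Ω] (fun _ => (0:ℝ)) := by
        filter_upwards [hae] with x hx
        rw [hx.1]; ring
      rw [integral_congr_ae e]; simp
    have hEu : ∫ x in Ω, HTF 0 q (u x) = n * N / 2 + q * M := by
      rw [key u hu, hA0, hB0]; ring
    exact ⟨hu, fun w hw => hEu ▸ lb w hw⟩
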